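/- Let α be a real number with α ≥ 1, and let F : ℂ → ℂ → ℂ be such that (z,w) ↦ F z w is analytic (jointly) on 𝔻 × 𝔻, F is Hermitian-symmetric on 𝔻 × 𝔻 (F z w = conj (F (conj w) (conj z)) for all z, w ∈ 𝔻), and F satisfies deriv (fun ζ => F ζ w) z = w² · deriv (fun ξ => F z ξ) w + α · w · F z w for all z, w ∈ 𝔻. Then F 0 0 is real and F z w = F 0 0 · (1 - z·w)^(-α) (principal-branch complex power) for all z, w ∈ 𝔻. -/

import Mathlib

open ComplexConjugate Complex

private lemma hasDerivAt_conj_conj' {G : ℂ → ℂ} {d z : ℂ}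
    (h : HasDerivAt G d (conj z)) :
    HasDerivAt (fun w : ℂ => conj (G (conj w))) (conj d) z := by
  rw [hasDerivAt_iff_isLittleO] at h ⊢
  have hc : Filter.Tendsto (fun x : ℂ => conj x) (nhds z) (nhds (conj z)) :=
    Complex.continuous_conj.tendsto z
  have h2 := h.comp_tendsto hc
  rw [← Asymptotics.isLittleO_norm_norm]
  refine (h2.norm_norm).congr (fun x => ?_) (fun x => ?_)
  · have : conj (G (conj x)) - conj (G (conj z)) - (x - z) • conj d
        = conj (G (conj x) - G (conj z) - (conj x - conj z) • d) := by
      simp only [smul_eq_mul, map_sub, map_mul, Complex.conj_conj]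
    rw [this, RCLike.norm_conj]
    rfl
  · have : (x : ℂ) - z = conj (conj x - conj z) := by
      simp only [map_sub, Complex.conj_conj]
    rw [this, RCLike.norm_conj]
    rfl

private lemma eq_at_zero_of_hasDerivAt_zero' {f : ℂ → ℂ}
    (hf : ∀ x ∈ Metric.ball (0 : ℂ) 1, HasDerivAt f 0 x) {z : ℂ}
    (hz : z ∈ Metric.ball (0 : ℂ) 1) : f z = f 0 := by
  refine (convex_ball (0 : ℂ) 1).is_const_of_fderivWithin_eq_zero (𝕜 := ℂ)
    (fun x hx => ((hf x hx).differentiableAt).differentiableWithinAt) ?_ hz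
    (Metric.mem_ball_self one_pos)
  intro x hx
  rw [fderivWithin_of_isOpen Metric.isOpen_ball hx]
  have h0 : HasFDerivAt f (0 : ℂ →L[ℂ] ℂ) x := by
    have h := (hf x hx).hasFDerivAt
    rw [ContinuousLinearMap.toSpanSingleton_zero] at h
    exact h
  exact h0.fderiv

theorem halpha_kernel_unique (α : ℝ) (hα : 1 ≤ α) (F : ℂ → ℂ → ℂ)
    (hA : AnalyticOn ℂ (fun p : ℂ × ℂ => F p.1 p.2)
      (Metric.ball (0 : ℂ) 1 ×ˢ Metric.ball (0 : ℂ) 1))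
    (hSym : ∀ z w : ℂ, ‖z‖ < 1 → ‖w‖ < 1 →
      F z w = conj (F (conj w) (conj z)))
    (hPDE : ∀ z w : ℂ, ‖z‖ < 1 → ‖w‖ < 1 →
      deriv (fun ζ : ℂ => F ζ w) z
        = w ^ 2 * deriv (fun ξ : ℂ => F z ξ) w + (α : ℂ) * w * F z w) :
    (F 0 0).im = 0 ∧
      ∀ z w : ℂ, ‖z‖ < 1 → ‖w‖ < 1 →
        F z w = F 0 0 * (1 - z * w) ^ (-(α : ℂ)) := by
  have hmem : ∀ {x : ℂ}, ‖x‖ < 1 → x ∈ Metric.ball (0 : ℂ) 1 := by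
    intro x hx
    rwa [Metric.mem_ball, dist_zero_right]
  have hmem' : ∀ {x : ℂ}, x ∈ Metric.ball (0 : ℂ) 1 → ‖x‖ < 1 := by
    intro x hx
    rwa [Metric.mem_ball, dist_zero_right] at hx
  have hA' : AnalyticOnNhd ℂ (fun p : ℂ × ℂ => F p.1 p.2)
      (Metric.ball (0 : ℂ) 1 ×ˢ Metric.ball (0 : ℂ) 1) :=
    ((Metric.isOpen_ball.prod Metric.isOpen_ball).analyticOn_iff_analyticOnNhd).mp hA
  have hd1 : ∀ z w : ℂ, ‖z‖ < 1 → ‖w‖ < 1 →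
      DifferentiableAt ℂ (fun ζ : ℂ => F ζ w) z := by
    intro z w hz hw
    have hjoint := (hA' (z, w) (Set.mk_mem_prod (hmem hz) (hmem hw))).differentiableAt
    exact DifferentiableAt.comp (𝕜 := ℂ) (g := fun p : ℂ × ℂ => F p.1 p.2)
      (f := fun ζ : ℂ => (ζ, w)) z hjoint (differentiableAt_id.prodMk (differentiableAt_const w))
  have hd2 : ∀ z w : ℂ, ‖z‖ < 1 → ‖w‖ < 1 →
      DifferentiableAt ℂ (fun ξ : ℂ => F z ξ) w := by
    intro z w hz hw
    have hjoint := (hA' (z, w) (Set.mk_mem_prod (hmem hz) (hmem hw))).differentiableAt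
    exact DifferentiableAt.comp (𝕜 := ℂ) (g := fun p : ℂ × ℂ => F p.1 p.2)
      (f := fun ξ : ℂ => (z, ξ)) w hjoint ((differentiableAt_const z).prodMk differentiableAt_id)
  -- swap lemma for derivatives via Hermitian symmetry
  have hswap : ∀ z w : ℂ, ‖z‖ < 1 → ‖w‖ < 1 →
      deriv (fun ζ : ℂ => F ζ w) z
        = conj (deriv (fun ξ : ℂ => F (conj w) ξ) (conj z)) := by
    intro z w hz hw
    have hzc : ‖conj z‖ < 1 := by rwa [Complex.norm_conj]
    have hwc : ‖conj w‖ < 1 := by rwa [Complex.norm_conj]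
    have hG : HasDerivAt (fun ξ : ℂ => F (conj w) ξ)
        (deriv (fun ξ : ℂ => F (conj w) ξ) (conj z)) (conj z) :=
      (hd2 (conj w) (conj z) hwc hzc).hasDerivAt
    have hK := hasDerivAt_conj_conj' hG
    have hev : (fun ζ : ℂ => F ζ w) =ᶠ[nhds z]
        (fun ζ : ℂ => conj (F (conj w) (conj ζ))) := by
      filter_upwards [Metric.isOpen_ball.mem_nhds (hmem hz)] with ζ hζ
      exact hSym ζ w (hmem' hζ) hw
    rw [hev.deriv_eq, hK.deriv]
  -- the second PDE
  have hPDE2 : ∀ z w : ℂ, ‖z‖ < 1 → ‖w‖ < 1 →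
      deriv (fun ξ : ℂ => F z ξ) w
        = z ^ 2 * deriv (fun ζ : ℂ => F ζ w) z + (α : ℂ) * z * F z w := by
    intro z w hz hw
    have hzc : ‖conj z‖ < 1 := by rwa [Complex.norm_conj]
    have hwc : ‖conj w‖ < 1 := by rwa [Complex.norm_conj]
    have hA1 := hswap z w hz hw
    have hA2 := hswap (conj w) (conj z) hwc hzc
    simp only [Complex.conj_conj] at hA2
    have hp := hPDE (conj w) (conj z) hwc hzc
    rw [hA2] at hp
    have hc := congrArg conj hp
    simp only [Complex.conj_conj, map_add, map_mul, map_pow, Complex.conj_ofReal] at hc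
    rw [← hA1, ← hSym z w hz hw] at hc
    exact hc
  -- nonvanishing facts
  have habs : ∀ z w : ℂ, ‖z‖ < 1 → ‖w‖ < 1 →
      ‖z * w‖ < 1 := by
    intro z w hz hw
    rw [norm_mul]
    nlinarith [norm_nonneg z, norm_nonneg w]
  have hslit : ∀ z w : ℂ, ‖z‖ < 1 → ‖w‖ < 1 →
      (1 - z * w) ∈ Complex.slitPlane := by
    intro z w hz hw
    left
    have h1 : (z * w).re ≤ ‖z * w‖ := Complex.re_le_norm _
    have h2 := habs z w hz hw
    simp only [Complex.sub_re, Complex.one_re]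
    linarith
  have hne0 : ∀ z w : ℂ, ‖z‖ < 1 → ‖w‖ < 1 →
      (1 - z * w) ≠ 0 := fun z w hz hw => Complex.slitPlane_ne_zero (hslit z w hz hw)
  -- the combined ODE
  have hODE : ∀ z w : ℂ, ‖z‖ < 1 → ‖w‖ < 1 →
      (1 - z * w) * deriv (fun ζ : ℂ => F ζ w) z = (α : ℂ) * w * F z w := by
    intro z w hz hw
    have h1 := hPDE z w hz hw
    have h2 := hPDE2 z w hz hw
    rw [h2] at h1
    have hne : (1 + z * w) ≠ 0 := by
      intro h
      have hzw : z * w = -1 := by linear_combination h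
      have := habs z w hz hw
      rw [hzw] at this
      simp at this
    have key : (1 + z * w) *
        ((1 - z * w) * deriv (fun ζ : ℂ => F ζ w) z - (α : ℂ) * w * F z w) = 0 := by
      linear_combination h1
    rcases mul_eq_zero.mp key with h | h
    · exact absurd h hne
    · exact sub_eq_zero.mp h
  -- F(0, w) is constant
  have hF0 : ∀ w : ℂ, ‖w‖ < 1 → F 0 w = F 0 0 := by
    intro w hw
    have key : ∀ x ∈ Metric.ball (0 : ℂ) 1, HasDerivAt (fun ξ : ℂ => F 0 ξ) 0 x := by
      intro x hx
      have hx' : ‖x‖ < 1 := hmem' hx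
      have hd := (hd2 0 x (by simp) hx').hasDerivAt
      have hz0 := hPDE2 0 x (by simp) hx'
      simp only [ne_eq, OfNat.ofNat_ne_zero, not_false_eq_true, zero_pow, zero_mul,
        mul_zero, add_zero] at hz0
      rwa [hz0] at hd
    exact eq_at_zero_of_hasDerivAt_zero' key (hmem hw)
  constructor
  · have h00 := hSym 0 0 (by simp) (by simp)
    simp only [map_zero] at h00
    exact (Complex.conj_eq_iff_im.mp h00.symm)
  · intro z w hz hw
    have hx0 : (1 - z * w) ≠ 0 := hne0 z w hz hw
    -- the function z ↦ F z w * (1-zw)^α has zero derivative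
    have key : ∀ x ∈ Metric.ball (0 : ℂ) 1,
        HasDerivAt (fun ζ : ℂ => F ζ w * (1 - ζ * w) ^ (α : ℂ)) 0 x := by
      intro x hx
      have hx' : ‖x‖ < 1 := hmem' hx
      have hxw0 : (1 - x * w) ≠ 0 := hne0 x w hx' hw
      have hF : HasDerivAt (fun ζ : ℂ => F ζ w) (deriv (fun ζ : ℂ => F ζ w) x) x :=
        (hd1 x w hx' hw).hasDerivAt
      have hlin : HasDerivAt (fun ζ : ℂ => 1 - ζ * w) (-w) x :=
        (hasDerivAt_mul_const w).const_sub 1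
      have hpow : HasDerivAt (fun ζ : ℂ => (1 - ζ * w) ^ (α : ℂ))
          ((α : ℂ) * (1 - x * w) ^ ((α : ℂ) - 1) * (-w)) x :=
        hlin.cpow_const (hslit x w hx' hw)
      have hmulD := hF.mul hpow
      have hsplit : (1 - x * w) ^ (α : ℂ)
          = (1 - x * w) ^ ((α : ℂ) - 1) * (1 - x * w) := by
        rw [show (α : ℂ) = ((α : ℂ) - 1) + 1 by ring, Complex.cpow_add _ _ hxw0,
          Complex.cpow_one]
        ring_nf
      have h0 : deriv (fun ζ : ℂ => F ζ w) x * (1 - x * w) ^ (α : ℂ)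
          + F x w * ((α : ℂ) * (1 - x * w) ^ ((α : ℂ) - 1) * (-w)) = 0 := by
        rw [hsplit]
        linear_combination ((1 - x * w) ^ ((α : ℂ) - 1)) * (hODE x w hx' hw)
      rwa [h0] at hmulD
    have hconst := eq_at_zero_of_hasDerivAt_zero' key (hmem hz)
    simp only [zero_mul, sub_zero, Complex.one_cpow, mul_one] at hconst
    rw [hF0 w hw] at hconst
    have hpne : (1 - z * w) ^ (α : ℂ) ≠ 0 := by
      intro h
      exact hx0 ((Complex.cpow_eq_zero_iff _ _).mp h).1
    rw [Complex.cpow_neg]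
    field_simp
    linear_combination hconst
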